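/- arXiv:1011.0804 — 6 statements merged into one kernel-verified Lean document; each statement's English description precedes it below -/
import Mathlib

section
/- If I is a monomial ideal of k[S] generated by monomials x^g for g in a set Γ ⊆ S, then Newt(I) = Conv(Γ) + σ, where Conv(Γ) is the convex hull of Γ and the sum is the Minkowski sum with the cone σ. -/
open Pointwise

/-- The embedding `M = ℤ^d → ℝ^d`. -/
def latticeEmbed {d : ℕ} (v : Fin d → ℤ) : Fin d → ℝ := fun i => (v i : ℝ)

/-- `σ` is a rational convex polyhedral cone in `ℝ^d`. -/
def IsRatPolyCone {d : ℕ} (σ : Set (Fin d → ℝ)) : Prop :=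
  ∃ G : Finset (Fin d → ℤ), σ =
    {x | ∃ c : (Fin d → ℤ) → ℝ, (∀ g, 0 ≤ c g) ∧ x = ∑ g ∈ G, c g • latticeEmbed g}

/-- The Newton polytope of an ideal `I` of `k[S]`. -/
noncomputable def Newt {d : ℕ} (k : Type*) [Field k] (S : AddSubmonoid (Fin d → ℤ))
    (I : Ideal (AddMonoidAlgebra k S)) : Set (Fin d → ℝ) :=
  convexHull ℝ {x | ∃ v : S, AddMonoidAlgebra.single v (1 : k) ∈ I ∧ x = latticeEmbed ↑v}

lemma latticeEmbed_add {d : ℕ} (a b : Fin d → ℤ) :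
    latticeEmbed (a + b) = latticeEmbed a + latticeEmbed b := by
  funext i; simp [latticeEmbed]

lemma latticeEmbed_nsmul {d : ℕ} (n : ℕ) (a : Fin d → ℤ) :
    latticeEmbed (n • a) = (n : ℝ) • latticeEmbed a := by
  funext i; simp [latticeEmbed]

lemma latticeEmbed_zero {d : ℕ} : latticeEmbed (0 : Fin d → ℤ) = 0 := by
  funext i; simp [latticeEmbed]

lemma isRatPolyCone_convex {d : ℕ} (σ : Set (Fin d → ℝ)) (hσ : IsRatPolyCone σ) :
    Convex ℝ σ := by
  obtain ⟨G, rfl⟩ := hσ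
  intro x hx y hy a b ha hb hab
  obtain ⟨c, hc, rfl⟩ := hx
  obtain ⟨c', hc', rfl⟩ := hy
  refine ⟨fun g => a * c g + b * c' g,
    fun g => add_nonneg (mul_nonneg ha (hc g)) (mul_nonneg hb (hc' g)), ?_⟩
  simp only [add_smul, mul_smul, Finset.sum_add_distrib, Finset.smul_sum]

lemma cone_eq_hull {d : ℕ} (S : AddSubmonoid (Fin d → ℤ)) (σ : Set (Fin d → ℝ))
    (hσ : IsRatPolyCone σ) (hS : ∀ v, v ∈ S ↔ latticeEmbed v ∈ σ) :
    σ = convexHull ℝ (latticeEmbed '' (S : Set (Fin d → ℤ))) := by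
  apply Set.Subset.antisymm
  · obtain ⟨G, hG⟩ := hσ
    -- each generator is in σ, hence in S
    have hGσ : ∀ g ∈ G, latticeEmbed g ∈ σ := by
      intro g hg
      rw [hG]
      refine ⟨fun h => if h = g then 1 else 0, fun h => by positivity, ?_⟩
      rw [Finset.sum_eq_single g]
      · simp
      · intro h hh hne; simp [hne]
      · intro h; exact absurd hg h
    have hGS : ∀ g ∈ G, g ∈ S := fun g hg => (hS g).2 (hGσ g hg)
    intro y hy
    rw [hG] at hy
    obtain ⟨c, hc, rfl⟩ := hy
    set T : ℝ := ∑ g ∈ G, c g with hT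
    have hT0 : 0 ≤ T := Finset.sum_nonneg fun g _ => hc g
    set N : ℕ := ⌈T⌉₊ + 1 with hNdef
    have hNpos : (0:ℝ) < N := by positivity
    have hTN : T ≤ N := le_trans (Nat.le_ceil T) (by push_cast [hNdef]; linarith)
    have hTN1 : T / N ≤ 1 := by
      rw [div_le_one hNpos]; exact hTN
    -- convex combination over Option
    have key := Convex.sum_mem (t := insert none (G.image some))
      (w := fun o : Option (Fin d → ℤ) => o.elim (1 - T / N) (fun g => c g / N))
      (z := fun o : Option (Fin d → ℤ) => o.elim 0 (fun g => latticeEmbed (N • g)))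
      (convex_convexHull ℝ (latticeEmbed '' (S : Set (Fin d → ℤ))))
      (by
        intro o ho
        match o with
        | none => simpa using by linarith
        | some g =>
          simp only [Option.elim]
          have : g ∈ G := by
            simp only [Finset.mem_insert, Finset.mem_image] at ho
            rcases ho with h | ⟨g', hg', h⟩
            · exact absurd h (by simp)
            · cases h; exact hg'
          exact div_nonneg (hc g) hNpos.le)
      (by
        rw [Finset.sum_insert (by simp), Finset.sum_image (fun a _ b _ h => Option.some.inj h)]
        simp only [Option.elim]
        rw [← Finset.sum_div]
        field_simp
        linarith)
      (by
        intro o ho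
        match o with
        | none =>
          refine subset_convexHull ℝ _ ⟨0, S.zero_mem, ?_⟩
          simp [latticeEmbed_zero]
        | some g =>
          have hg : g ∈ G := by
            simp only [Finset.mem_insert, Finset.mem_image] at ho
            rcases ho with h | ⟨g', hg', h⟩
            · exact absurd h (by simp)
            · cases h; exact hg'
          exact subset_convexHull ℝ _ ⟨N • g, S.nsmul_mem (hGS g hg) N, rfl⟩)
    convert key using 1
    rw [Finset.sum_insert (by simp), Finset.sum_image (fun a _ b _ h => Option.some.inj h)]
    simp only [Option.elim, smul_zero, zero_add]
    apply Finset.sum_congr rfl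
    intro g hg
    rw [latticeEmbed_nsmul, smul_smul, div_mul_cancel₀]
    exact ne_of_gt hNpos
  · apply convexHull_min
    · rintro x ⟨v, hv, rfl⟩
      exact (hS v).1 hv
    · exact isRatPolyCone_convex σ hσ

lemma mem_span_single_iff {d : ℕ} (k : Type*) [Field k] (S : AddSubmonoid (Fin d → ℤ))
    (Γ : Set S) (v : S) :
    AddMonoidAlgebra.single v (1 : k) ∈
      Ideal.span ((fun γ : S => AddMonoidAlgebra.single γ (1 : k)) '' Γ) ↔
    ∃ γ ∈ Γ, ∃ s : S, v = γ + s := by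
  classical
  constructor
  · intro h
    rw [Ideal.span, Submodule.mem_span_set] at h
    obtain ⟨c, hsupp, hsum⟩ := h
    have h1 : (c.sum fun mi r => r • mi).coeff v = 1 := by
      rw [hsum]; simp [AddMonoidAlgebra.coeff_single]
    rw [AddMonoidAlgebra.coeff_finsuppSum, Finsupp.sum_apply] at h1
    have hne : (c.sum fun mi r => (r • mi).coeff v) ≠ 0 := by rw [h1]; exact one_ne_zero
    obtain ⟨i, hi, hiv⟩ := Finset.exists_ne_zero_of_sum_ne_zero hne
    obtain ⟨γ, hγ, rfl⟩ := hsupp hi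
    have hvmem : v ∈ ((c (AddMonoidAlgebra.single γ 1)) *
        (AddMonoidAlgebra.single γ (1:k))).coeff.support := by
      rw [Finsupp.mem_support_iff]
      simpa [smul_eq_mul] using hiv
    have := AddMonoidAlgebra.support_coeff_mul_subset (c (AddMonoidAlgebra.single γ 1))
      (AddMonoidAlgebra.single γ (1:k)) hvmem
    rw [Finset.mem_add] at this
    obtain ⟨a, _, b, hb, hab⟩ := this
    have hbγ : b = γ := by
      have := Finsupp.support_single_subset hb
      simpa using this
    exact ⟨γ, hγ, a, by rw [← hab, hbγ, add_comm]⟩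
  · rintro ⟨γ, hγ, s, rfl⟩
    have : AddMonoidAlgebra.single (γ + s) (1:k) =
        AddMonoidAlgebra.single s (1:k) * AddMonoidAlgebra.single γ (1:k) := by
      rw [AddMonoidAlgebra.single_mul_single, one_mul, add_comm]
    rw [this]
    exact Ideal.mul_mem_left _ _ (Ideal.subset_span ⟨γ, hγ, rfl⟩)

/-- If `I` is the monomial ideal of `k[S]` generated by the monomials
`x^g`, `g ∈ Γ ⊆ S`, then `Newt(I) = Conv(Γ) + σ` (Minkowski sum with the cone `σ`). -/
theorem stmt_1 {d : ℕ} (k : Type*) [Field k] (S : AddSubmonoid (Fin d → ℤ))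
    (σ : Set (Fin d → ℝ)) (hσ : IsRatPolyCone σ)
    (hS : ∀ v : Fin d → ℤ, v ∈ S ↔ latticeEmbed v ∈ σ)
    (Γ : Set S) (I : Ideal (AddMonoidAlgebra k S))
    (hI : I = Ideal.span ((fun v : S => AddMonoidAlgebra.single v (1 : k)) '' Γ)) :
    Newt k S I = convexHull ℝ (latticeEmbed '' ((↑) '' Γ)) + σ := by
  subst hI
  have hset : {x | ∃ v : S, AddMonoidAlgebra.single v (1 : k) ∈
      Ideal.span ((fun v : S => AddMonoidAlgebra.single v (1 : k)) '' Γ) ∧ x = latticeEmbed ↑v}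
      = (latticeEmbed '' ((↑) '' Γ)) + (latticeEmbed '' (S : Set (Fin d → ℤ))) := by
    ext x
    simp only [Set.mem_setOf_eq, mem_span_single_iff, Set.mem_add]
    constructor
    · rintro ⟨v, ⟨γ, hγ, s, rfl⟩, rfl⟩
      refine ⟨latticeEmbed ↑γ, ⟨↑γ, ⟨γ, hγ, rfl⟩, rfl⟩,
        latticeEmbed ↑s, ⟨↑s, s.2, rfl⟩, ?_⟩
      rw [← latticeEmbed_add]
      rfl
    · rintro ⟨p, ⟨_, ⟨γ, hγ, rfl⟩, rfl⟩, q, ⟨sv, hsv, rfl⟩, rfl⟩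
      refine ⟨γ + ⟨sv, hsv⟩, ⟨γ, hγ, ⟨sv, hsv⟩, rfl⟩, ?_⟩
      rw [← latticeEmbed_add]
      rfl
  rw [Newt, hset, convexHull_add, ← cone_eq_hull S σ hσ hS]
end

section
/- Let R be a ring of characteristic p > 0 and φ : R → R a surjective p^{−e}-linear map. Then every ideal I with φ(I) = I is a radical ideal. -/
/-- Let `R` be a ring of characteristic `p > 0` and `φ : R → R` a
surjective `p^{−e}`-linear map (additive, with `φ(r^{p^e}·x) = r·φ(x)`).  Then every
ideal `I` with `φ(I) = I` (image of `I` under `φ` equals `I`) is a radical ideal. -/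
theorem stmt_6 {R : Type*} [CommRing R] (p : ℕ) (hp : p.Prime) [CharP R p]
    (e : ℕ) (he : 0 < e) (φ : R → R)
    (hadd : ∀ x y, φ (x + y) = φ x + φ y)
    (hlin : ∀ r x, φ (r ^ p ^ e * x) = r * φ x)
    (hsurj : Function.Surjective φ)
    (I : Ideal R) (hI : φ '' (I : Set R) = (I : Set R)) :
    I.IsRadical := by
  have hk : 1 < p ^ e := Nat.one_lt_pow he.ne' hp.one_lt
  rw [Ideal.isRadical_iff_pow_one_lt (p ^ e) hk]
  intro r hr
  obtain ⟨y, hy⟩ := hsurj 1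
  have hmem : r ^ p ^ e * y ∈ I := Ideal.mul_mem_right _ _ hr
  have : φ (r ^ p ^ e * y) ∈ (I : Set R) := by
    rw [← hI]; exact Set.mem_image_of_mem _ hmem
  rwa [hlin, hy, mul_one] at this
end

section
/- Let R be a ring of characteristic p > 0 and φ : R → R a surjective p^{−e}-linear map. If I and J are ideals with φ(I) ⊆ I and φ(J) ⊆ J, then φ(I ∩ J) ⊆ I ∩ J; moreover, for surjective φ, any ideal K with φ(K) ⊆ K automatically satisfies φ(K) = K. -/
/-- Let `R` have characteristic `p > 0` and `φ : R → R` be a surjective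
`p^{−e}`-linear map.  If `I`, `J` are ideals with `φ(I) ⊆ I` and `φ(J) ⊆ J`, then
`φ(I ∩ J) ⊆ I ∩ J`; moreover any ideal `K` with `φ(K) ⊆ K` satisfies `φ(K) = K`. -/
theorem stmt_7 {R : Type*} [CommRing R] (p : ℕ) (hp : p.Prime) [CharP R p]
    (e : ℕ) (he : 0 < e) (φ : R → R)
    (hadd : ∀ x y, φ (x + y) = φ x + φ y)
    (hlin : ∀ r x, φ (r ^ p ^ e * x) = r * φ x)
    (hsurj : Function.Surjective φ) :
    (∀ I J : Ideal R, φ '' (I : Set R) ⊆ (I : Set R) → φ '' (J : Set R) ⊆ (J : Set R) →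
        φ '' ((I ⊓ J : Ideal R) : Set R) ⊆ ((I ⊓ J : Ideal R) : Set R)) ∧
    (∀ K : Ideal R, φ '' (K : Set R) ⊆ (K : Set R) → φ '' (K : Set R) = (K : Set R)) := by
  constructor
  · rintro I J hI hJ y ⟨x, ⟨hxI, hxJ⟩, rfl⟩
    exact ⟨hI ⟨x, hxI, rfl⟩, hJ ⟨x, hxJ, rfl⟩⟩
  · intro K hK
    apply Set.Subset.antisymm hK
    intro k hk
    obtain ⟨u, hu⟩ := hsurj 1
    refine ⟨k ^ p ^ e * u, ?_, by rw [hlin, hu, mul_one]⟩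
    exact Ideal.mul_mem_right _ _ (Ideal.pow_mem_of_mem K hk _ (pow_pos hp.pos e))
end

section
/- In the polynomial ring R = k[x] over a perfect field k of characteristic p > 0, with canonical splitting φ_c : R → R sending x^i to x^{i/p} if p divides i and to 0 otherwise (extended p^{−1}-linearly), the fractional R-submodule of k(x) generated by 1/(x+1) is φ_c-fixed: applying the natural extension of φ_c to fraction field elements maps this fractional ideal onto itself. -/
open Polynomial

/-- Let `R = k[x]`, `k` a perfect field of characteristic `p`, and let
`φ_c` be (the natural extension to `k(x)` of) the canonical splitting, the
`p^{−1}`-linear map with `φ_c(x^i) = x^{i/p}` if `p ∣ i` and `0` otherwise.  Then the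
fractional `R`-submodule of `k(x)` generated by `1/(x+1)` is `φ_c`-fixed: `φ_c` maps
it onto itself. -/
theorem stmt_9 {k : Type*} [Field k] (p : ℕ) [Fact p.Prime] [CharP k p]
    [PerfectRing k p]
    (φ : RatFunc k → RatFunc k)
    (hadd : ∀ x y, φ (x + y) = φ x + φ y)
    (hlin : ∀ f g : RatFunc k, φ (f ^ p * g) = f * φ g)
    (hmono : ∀ i : ℕ,
      φ (algebraMap (Polynomial k) (RatFunc k) (Polynomial.X ^ i)) =
        if p ∣ i then algebraMap (Polynomial k) (RatFunc k) (Polynomial.X ^ (i / p))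
        else 0) :
    φ '' ((Submodule.span (Polynomial k)
        {(algebraMap (Polynomial k) (RatFunc k) (Polynomial.X + 1))⁻¹} :
        Submodule (Polynomial k) (RatFunc k)) : Set (RatFunc k))
      = ((Submodule.span (Polynomial k)
        {(algebraMap (Polynomial k) (RatFunc k) (Polynomial.X + 1))⁻¹} :
        Submodule (Polynomial k) (RatFunc k)) : Set (RatFunc k)) := by
  classical
  have hp : p.Prime := Fact.out
  set A := algebraMap (Polynomial k) (RatFunc k) with hA
  let ψ : RatFunc k →+ RatFunc k := AddMonoidHom.mk' φ hadd
  have hφψ : ∀ x, φ x = ψ x := fun _ => rfl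
  set u : RatFunc k := A (X + 1) with hu
  have hX1 : (X + 1 : Polynomial k) ≠ 0 := by
    intro h
    have := congrArg (Polynomial.eval 0) h
    simp at this
  have huz : u ≠ 0 := by
    exact RatFunc.algebraMap_ne_zero hX1
  -- L2 : φ of a polynomial is a polynomial
  have L2 : ∀ q : Polynomial k, ∃ s : Polynomial k, φ (A q) = A s := by
    intro q
    induction q using Polynomial.induction_on' with
    | add f g hf hg =>
      obtain ⟨s, hs⟩ := hf
      obtain ⟨t, ht⟩ := hg
      exact ⟨s + t, by rw [map_add, hadd, hs, ht, map_add]⟩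
    | monomial n a =>
      obtain ⟨b, hb⟩ := surjective_frobenius k p a
      have hmon : (Polynomial.monomial n a : Polynomial k) = (C b)^p * X^n := by
        rw [← hb, frobenius_def, ← C_pow, C_mul_X_pow_eq_monomial]
      have : φ (A (Polynomial.monomial n a)) = A (C b) * φ (A (X^n)) := by
        rw [hmon, map_mul, map_pow, hlin]
      rw [this, hmono]
      by_cases hdvd : p ∣ n
      · exact ⟨C b * X^(n/p), by simp [hdvd, map_mul]⟩
      · exact ⟨0, by simp [hdvd]⟩
  -- key : φ (A ((X+1)^(p-1))) = 1
  have hg : (∑ i ∈ Finset.range p, (-X : Polynomial k)^i) = (X + 1)^(p-1) := by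
    have h1 : (∑ i ∈ Finset.range p, (-X : Polynomial k)^i) * (X + 1)
        = (X + 1)^(p-1) * (X + 1) := by
      have hgm := geom_sum_mul (-X : Polynomial k) p
      have hneg : (-X : Polynomial k)^p = -(X^p) := by
        have := map_neg (frobenius (Polynomial k) p) X
        simpa [frobenius_def] using this
      have h2 : (∑ i ∈ Finset.range p, (-X : Polynomial k)^i) * (-(X + 1))
          = -(X^p + 1) := by
        rw [show (-(X + 1) : Polynomial k) = -X - 1 by ring, hgm, hneg]; ring
      have h3 : (∑ i ∈ Finset.range p, (-X : Polynomial k)^i) * (X + 1)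
          = X^p + 1 := by linear_combination -h2
      rw [h3, ← pow_succ, Nat.sub_add_cancel hp.one_le, add_pow_char, one_pow]
    exact mul_right_cancel₀ hX1 h1
  have hkey : φ (A ((X + 1)^(p-1))) = 1 := by
    rw [← hg, map_sum, hφψ, map_sum]
    rw [Finset.sum_eq_single 0]
    · have := hmono 0
      simp only [pow_zero, map_one] at this ⊢
      rw [← hφψ]
      simpa using this
    · intro i hi hi0
      have hiltp : i < p := Finset.mem_range.mp hi
      have hndvd : ¬ p ∣ i := fun hd => hi0 (Nat.eq_zero_of_dvd_of_lt hd hiltp)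
      have hzero : φ (A (X^i)) = 0 := by rw [hmono]; simp [hndvd]
      rcases Nat.even_or_odd i with he | ho
      · rw [he.neg_pow, ← hφψ, hzero]
      · rw [ho.neg_pow, map_neg A, map_neg ψ, ← hφψ, hzero, neg_zero]
    · intro h
      exact absurd (Finset.mem_range.mpr hp.pos) h
  have hsplit : ∀ w : RatFunc k, (u⁻¹)^p * (w * A ((X+1)^(p-1))) = w * u⁻¹ := by
    intro w
    have hup : A ((X+1)^(p-1)) = u^(p-1) := by rw [hu, map_pow]
    rw [hup, show p = (p-1) + 1 from (Nat.sub_add_cancel hp.one_le).symm]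
    calc (u⁻¹)^((p-1)+1) * (w * u^(p-1))
        = w * ((u⁻¹^(p-1) * u^(p-1)) * u⁻¹) := by ring
      _ = w * u⁻¹ := by rw [← mul_pow, inv_mul_cancel₀ huz, one_pow, one_mul]
  -- L3 : φ (u⁻¹) = u⁻¹
  have L3 : φ u⁻¹ = u⁻¹ := by
    have h1 := hsplit 1
    rw [one_mul, one_mul] at h1
    rw [← h1, hlin, hkey, mul_one]
    exact h1.symm
  -- main
  ext x
  simp only [Set.mem_image, SetLike.mem_coe, Submodule.mem_span_singleton]
  constructor
  · rintro ⟨y, ⟨r, hr⟩, rfl⟩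
    have hy : y = (u⁻¹)^p * A (r * (X+1)^(p-1)) := by
      rw [← hr, Algebra.smul_def, map_mul, hsplit (A r)]
    obtain ⟨s, hs⟩ := L2 (r * (X+1)^(p-1))
    refine ⟨s, ?_⟩
    rw [hy, hlin, hs, Algebra.smul_def, mul_comm]
  · rintro ⟨r, hr⟩
    refine ⟨(A r)^p * u⁻¹, ⟨r^p, ?_⟩, ?_⟩
    · rw [Algebra.smul_def, map_pow]
    · rw [hlin, L3, ← hr, Algebra.smul_def]
end

section
/- With the toric setup (R = k[S], φ the toric p^{−e}-linear map with parameter w, 𝔞 a monomial ideal, t ≥ 0 rational with denominator prime to p): if I is C^{φ,𝔞^t}-fixed and F is a face of t·Newt(𝔞) such that some exponent v₀ with x^{v₀} ∈ I lies in w/(1−p^e) + F, then for every lattice point v in relint(w/(1−p^e) + F) ∩ S, the monomial x^v belongs to I. -/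
open Pointwise

/-- `I` is a monomial ideal. -/
def IsMonomialIdeal {d : ℕ} (k : Type*) [Field k] (S : AddSubmonoid (Fin d → ℤ))
    (I : Ideal (AddMonoidAlgebra k S)) : Prop :=
  ∃ E : Set S, I = Ideal.span ((fun v : S => AddMonoidAlgebra.single v (1 : k)) '' E)

/-- The set of elements integral over the ideal `J` (the integral closure of `J`). -/
def intClSet {R : Type*} [CommRing R] (J : Ideal R) : Set R :=
  {x | ∃ m : ℕ, 0 < m ∧ ∃ c : ℕ → R, (∀ i < m, c i ∈ J ^ (m - i)) ∧
    x ^ m + ∑ i ∈ Finset.range m, c i * x ^ i = 0}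

/-- `I` is `C^{φ,𝔞^t}`-fixed: `∑_{n>0} φⁿ(\overline{𝔞^{t(p^{ne}−1)}}·I) = I`, the sum
running over `n > 0` with `t(p^{ne}−1) ∈ ℤ`. -/
def IsCartierFixed {R : Type*} [CommRing R] (p e : ℕ) (t : ℚ) (φ : R → R)
    (𝔞 I : Ideal R) : Prop :=
  Ideal.span {y : R | ∃ n N : ℕ, 0 < n ∧ (N : ℚ) = t * ((p : ℚ) ^ (n * e) - 1) ∧
    ∃ z ∈ Ideal.span (intClSet (𝔞 ^ N)) * I, y = φ^[n] z} = I

/-- `F` is a face of the convex set `C` (with `C` a face of itself). -/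
def IsFaceOf {d : ℕ} (F C : Set (Fin d → ℝ)) : Prop :=
  F ⊆ C ∧ Convex ℝ F ∧ ∀ x ∈ C, ∀ y ∈ C, ∀ δ : ℝ, 0 < δ → δ < 1 →
    δ • x + (1 - δ) • y ∈ F → x ∈ F ∧ y ∈ F

/- ### Auxiliary lemmas -/


open Finset in
lemma rat_mem_span {n : ℕ} {ι : Type*} [Fintype ι] (f : ι → (Fin n → ℚ)) (x : Fin n → ℚ)
    (lam : ι → ℝ) (hx : (fun i => (x i : ℝ)) = ∑ j, lam j • (fun i => ((f j i : ℚ) : ℝ))) :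
    ∃ μ : ι → ℚ, x = ∑ j, μ j • f j := by
  have hmem : x ∈ Submodule.span ℚ (Set.range f) := by
    by_contra hnx
    set W := Submodule.span ℚ (Set.range f)
    have hq : W.mkQ x ≠ 0 := by
      simpa [Submodule.mkQ_apply, Submodule.Quotient.mk_eq_zero] using hnx
    have hq2 : ¬ ∀ ψ : Module.Dual ℚ _, ψ (W.mkQ x) = 0 := fun h =>
      hq ((Module.forall_dual_apply_eq_zero_iff ℚ _).1 h)
    obtain ⟨ψ, hψ⟩ := not_forall.1 hq2
    set φ : (Fin n → ℚ) →ₗ[ℚ] ℚ := ψ.comp W.mkQ with hφdef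
    have hφx : φ x ≠ 0 := hψ
    have hφf : ∀ j, φ (f j) = 0 := by
      intro j
      have : (f j) ∈ W := Submodule.subset_span ⟨j, rfl⟩
      simp [hφdef, (Submodule.Quotient.mk_eq_zero W).2 this]
    set Φ : (Fin n → ℝ) →ₗ[ℝ] ℝ :=
      ∑ i, ((φ (Pi.single i 1) : ℝ)) • (LinearMap.proj i) with hΦdef
    have key : ∀ q : Fin n → ℚ, Φ (fun i => (q i : ℝ)) = (φ q : ℝ) := by
      intro q
      have hq' : q = ∑ i, q i • (Pi.single i (1 : ℚ) : Fin n → ℚ) := by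
        conv_lhs => rw [← Finset.univ_sum_single q]
        refine Finset.sum_congr rfl fun i _ => ?_
        ext j
        simp [Pi.single_apply]
      rw [hΦdef]
      simp only [LinearMap.sum_apply, LinearMap.smul_apply, LinearMap.proj_apply, smul_eq_mul]
      conv_rhs => rw [hq']
      rw [map_sum, Rat.cast_sum]
      refine Finset.sum_congr rfl fun i _ => ?_
      rw [map_smul, smul_eq_mul, Rat.cast_mul, mul_comm]
    have h1 : Φ (fun i => (x i : ℝ)) = (φ x : ℝ) := key x
    have h2 : Φ (fun i => (x i : ℝ)) = 0 := by
      rw [hx, map_sum]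
      refine Finset.sum_eq_zero fun j _ => ?_
      rw [map_smul, key (f j), hφf j]
      simp
    rw [h2] at h1
    exact hφx (by exact_mod_cast h1.symm)
  rw [Submodule.mem_span_range_iff_exists_fun] at hmem
  obtain ⟨μ, hμ⟩ := hmem
  exact ⟨μ, hμ.symm⟩

lemma rat_convex_rep {d : ℕ} (A : Set (Fin d → ℝ))
    (hA : ∀ y ∈ A, ∃ q : Fin d → ℚ, y = fun i => (q i : ℝ)) (z : Fin d → ℚ)
    (hz : (fun i => (z i : ℝ)) ∈ convexHull ℝ A) :
    ∃ (ι : Type) (_ : Fintype ι) (pt : ι → (Fin d → ℝ)) (μ : ι → ℚ),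
      Set.range pt ⊆ A ∧ (∀ j, 0 ≤ μ j) ∧ (∑ j, μ j = 1) ∧
      (∑ j, (μ j : ℝ) • pt j = fun i => (z i : ℝ)) := by
  obtain ⟨ι, hfin, pt, lam, hrange, hai, hpos, hsum, hcomb⟩ :=
    eq_pos_convex_span_of_mem_convexHull hz
  refine ⟨ι, hfin, pt, ?_⟩
  choose q hq using fun j => hA (pt j) (hrange ⟨j, rfl⟩)
  set f : ι → (Fin (d + 1) → ℚ) := fun j i => if h : (i : ℕ) < d then q j ⟨i, h⟩ else 1 with hf
  set x : Fin (d + 1) → ℚ := fun i => if h : (i : ℕ) < d then z ⟨i, h⟩ else 1 with hxdef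
  have hx : (fun i => (x i : ℝ)) = ∑ j, lam j • (fun i => ((f j i : ℚ) : ℝ)) := by
    funext i
    rw [Finset.sum_apply]
    by_cases h : (i : ℕ) < d
    · have hthis := congrFun hcomb ⟨i, h⟩
      rw [Finset.sum_apply] at hthis
      simp only [hxdef, hf, h, dif_pos]
      rw [← hthis]
      refine Finset.sum_congr rfl fun j _ => ?_
      simp [hq j, h]
    · simp only [hxdef, hf, Pi.smul_apply, smul_eq_mul, dif_neg h]
      simp [hsum]
  obtain ⟨μ, hμ⟩ := rat_mem_span f x lam hx
  have hμsum : ∑ j, μ j = 1 := by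
    have := congrFun hμ ⟨d, by omega⟩
    rw [Finset.sum_apply] at this
    simpa [hxdef, hf] using this.symm
  have hμcomb : ∑ j, (μ j : ℝ) • pt j = fun i => (z i : ℝ) := by
    funext i
    rw [Finset.sum_apply]
    have := congrFun hμ (Fin.castLE (by omega) i)
    rw [Finset.sum_apply] at this
    have hi : ((Fin.castLE (by omega : d ≤ d + 1) i : Fin (d+1)) : ℕ) < d := i.isLt
    simp only [hxdef, hf, hi, dif_pos, Pi.smul_apply, smul_eq_mul] at this
    have : z i = ∑ j, μ j * q j i := by simpa using this
    rw [this]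
    push_cast
    refine Finset.sum_congr rfl fun j _ => ?_
    rw [hq j]
    simp
  have hcomb' : Finset.univ.affineCombination ℝ pt lam =
      Finset.univ.affineCombination ℝ pt (fun j => (μ j : ℝ)) := by
    rw [Finset.affineCombination_eq_linear_combination _ _ _ hsum,
      Finset.affineCombination_eq_linear_combination _ _ _ (by exact_mod_cast hμsum)]
    rw [hcomb, hμcomb]
  have := hai.indicator_eq_of_affineCombination_eq Finset.univ Finset.univ lam
    (fun j => (μ j : ℝ)) hsum (by exact_mod_cast hμsum) hcomb'
  simp only [Finset.coe_univ, Set.indicator_univ] at this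
  refine ⟨μ, hrange, fun j => ?_, hμsum, hμcomb⟩
  have hj := hpos j
  rw [congrFun this j] at hj
  exact_mod_cast hj.le

lemma exists_eps_beyond {d : ℕ} {F : Set (Fin d → ℝ)} {a b : Fin d → ℝ}
    (ha : a ∈ intrinsicInterior ℝ F) (hb : b ∈ F) :
    ∃ ε > (0:ℝ), ∀ μ : ℝ, 0 ≤ μ → μ < ε → a + μ • (a - b) ∈ F := by
  obtain ⟨abar, habar, hcoe⟩ := ha
  have haF : a ∈ F := by
    have := interior_subset habar
    simpa [hcoe] using this
  have hmem : ∀ μ : ℝ, a + μ • (a - b) ∈ affineSpan ℝ F := by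
    intro μ
    have h1 : a ∈ affineSpan ℝ F := subset_affineSpan ℝ F haF
    have h2 : b ∈ affineSpan ℝ F := subset_affineSpan ℝ F hb
    have hd : a - b ∈ (affineSpan ℝ F).direction := by
      simpa [vsub_eq_sub] using AffineSubspace.vsub_mem_direction h1 h2
    have : μ • (a - b) +ᵥ a ∈ affineSpan ℝ F :=
      AffineSubspace.vadd_mem_of_mem_direction (Submodule.smul_mem _ μ hd) h1
    simpa [vadd_eq_add, add_comm] using this
  set f : ℝ → affineSpan ℝ F := fun μ => ⟨a + μ • (a - b), hmem μ⟩ with hfdef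
  have hf : Continuous f := by
    apply Continuous.subtype_mk
    exact continuous_const.add (continuous_id.smul continuous_const)
  have hf0 : f 0 = abar := by
    apply Subtype.ext
    simp [hfdef, hcoe]
  have hU : f ⁻¹' (interior (((↑) : affineSpan ℝ F → _) ⁻¹' F)) ∈ nhds (0:ℝ) := by
    apply hf.continuousAt.preimage_mem_nhds
    rw [hf0]
    exact isOpen_interior.mem_nhds habar
  obtain ⟨ε, hε, hball⟩ := Metric.mem_nhds_iff.1 hU
  refine ⟨ε, hε, fun μ hμ0 hμε => ?_⟩
  have : f μ ∈ interior (((↑) : affineSpan ℝ F → _) ⁻¹' F) := by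
    apply hball
    simp [Metric.mem_ball, Real.dist_eq, abs_of_nonneg hμ0, hμε]
  have := interior_subset this
  simpa [hfdef] using this

lemma exists_good_n (p e : ℕ) (hp : p.Prime) (he : 0 < e) (t : ℚ) (ht : 0 ≤ t)
    (hden : ¬ p ∣ t.den) (C : ℝ) :
    ∃ n N : ℕ, 0 < n ∧ (N : ℚ) = t * ((p : ℚ) ^ (n * e) - 1) ∧
      C < (p : ℝ) ^ (n * e) - 1 := by
  set D := t.den with hD
  have hDpos : 0 < D := t.pos
  haveI : NeZero D := ⟨hDpos.ne'⟩
  have hcop : Nat.Coprime (p ^ e) D := (Nat.Coprime.pow_left e ((hp.coprime_iff_not_dvd).2 hden))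
  set u : (ZMod D)ˣ := ZMod.unitOfCoprime (p ^ e) hcop with hu
  set r := orderOf u with hr
  have hrpos : 0 < r := orderOf_pos u
  set kk := Nat.ceil C + 1 with hkk
  set n := kk * r with hn
  have hnpos : 0 < n := Nat.mul_pos (Nat.succ_pos _) hrpos
  have hdvd : (D : ℤ) ∣ ((p : ℤ) ^ (n * e) - 1) := by
    have h1 : u ^ n = 1 := by
      rw [hn, mul_comm kk r, pow_mul, pow_orderOf_eq_one u, one_pow]
    have h2 : ((p : ZMod D) ^ e) ^ n = 1 := by
      have := congrArg (Units.val) h1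
      simpa [hu, ZMod.coe_unitOfCoprime, Units.val_pow_eq_pow_val] using this
    have h3 : (((p : ℤ) ^ (n * e) - 1 : ℤ) : ZMod D) = 0 := by
      push_cast
      rw [mul_comm n e, pow_mul]
      rw [sub_eq_zero]
      exact_mod_cast h2
    exact (ZMod.intCast_zmod_eq_zero_iff_dvd _ _).1 h3
  set Dz : ℤ := (p : ℤ) ^ (n * e) - 1 with hDz
  have hDznn : 0 ≤ Dz := by
    rw [hDz]
    simp only [sub_nonneg]
    exact one_le_pow₀ (by exact_mod_cast hp.one_lt.le)
  set z : ℤ := t.num * (Dz / (D : ℤ)) with hz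
  have hznn : 0 ≤ z := mul_nonneg (Rat.num_nonneg.2 ht) (Int.ediv_nonneg hDznn (by positivity))
  have hzq : (z : ℚ) = t * ((p : ℚ) ^ (n * e) - 1) := by
    have hDne : ((D : ℚ)) ≠ 0 := by positivity
    have hmul : (D : ℤ) * (Dz / (D : ℤ)) = Dz := Int.mul_ediv_cancel' hdvd
    have hcast : ((Dz / (D : ℤ) : ℤ) : ℚ) = (Dz : ℚ) / (D : ℚ) := by
      rw [eq_div_iff hDne]
      exact_mod_cast congrArg (fun x : ℤ => (x : ℚ))
        ((mul_comm (D:ℤ) _ ▸ hmul) : (Dz / (D:ℤ)) * (D:ℤ) = Dz)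
    have htnum : (t.num : ℚ) = t * D := by
      rw [hD]
      exact (Rat.mul_den_eq_num t).symm
    have hDzq : (Dz : ℚ) = (p : ℚ) ^ (n * e) - 1 := by
      rw [hDz]; push_cast; ring
    calc (z : ℚ) = (t.num : ℚ) * ((Dz / (D : ℤ) : ℤ) : ℚ) := by rw [hz]; push_cast; ring
    _ = (t * D) * ((Dz : ℚ) / (D : ℚ)) := by rw [htnum, hcast]
    _ = t * (Dz : ℚ) := by field_simp
    _ = t * ((p : ℚ) ^ (n * e) - 1) := by rw [hDzq]
  refine ⟨n, z.toNat, hnpos, ?_, ?_⟩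
  · have hh : ((z.toNat : ℕ) : ℚ) = (z : ℚ) := by exact_mod_cast Int.toNat_of_nonneg hznn
    rw [hh]; exact hzq
  · have h1 : n * e < p ^ (n * e) := Nat.lt_pow_self hp.one_lt
    have h2 : kk ≤ n * e := by
      calc kk ≤ kk * r := Nat.le_mul_of_pos_right _ hrpos
      _ ≤ (kk * r) * e := Nat.le_mul_of_pos_right _ he
    have h3 : kk + 1 ≤ p ^ (n * e) := by omega
    have h4 : (kk : ℝ) ≤ (p : ℝ) ^ (n * e) - 1 := by
      have h5 : ((kk + 1 : ℕ) : ℝ) ≤ ((p ^ (n * e) : ℕ) : ℝ) := by exact_mod_cast h3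
      push_cast at h5 ⊢
      linarith
    have h5 : C < (kk : ℝ) := by
      rw [hkk]
      push_cast
      have := Nat.le_ceil C
      linarith
    linarith

lemma cone_smul_mem {d : ℕ} {σ : Set (Fin d → ℝ)} (hσ : IsRatPolyCone σ) {r : ℝ}
    (hr : 0 ≤ r) {x : Fin d → ℝ} (hx : x ∈ σ) : r • x ∈ σ := by
  obtain ⟨G, rfl⟩ := hσ
  obtain ⟨c, hc, rfl⟩ := hx
  refine ⟨fun g => r * c g, fun g => mul_nonneg hr (hc g), ?_⟩
  rw [Finset.smul_sum]
  refine Finset.sum_congr rfl fun g _ => ?_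
  simp [smul_smul]

lemma cone_convex {d : ℕ} {σ : Set (Fin d → ℝ)} (hσ : IsRatPolyCone σ) : Convex ℝ σ := by
  obtain ⟨G, rfl⟩ := hσ
  rintro x ⟨c, hc, rfl⟩ y ⟨c', hc', rfl⟩ a b ha hb _
  refine ⟨fun g => a * c g + b * c' g, fun g =>
    add_nonneg (mul_nonneg ha (hc g)) (mul_nonneg hb (hc' g)), ?_⟩
  rw [Finset.smul_sum, Finset.smul_sum, ← Finset.sum_add_distrib]
  refine Finset.sum_congr rfl fun g _ => ?_
  rw [add_smul, smul_smul, smul_smul]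

set_option synthInstance.maxHeartbeats 1000000 in
lemma intrinsic_translate {d : ℕ} (c : Fin d → ℝ) (F : Set (Fin d → ℝ)) :
    intrinsicInterior ℝ ({c} + F) = {c} + intrinsicInterior ℝ F := by
  have h1 : ({c} + F : Set (Fin d → ℝ)) =
      (AffineIsometryEquiv.constVAdd ℝ (Fin d → ℝ) c).toAffineIsometry '' F := by
    rw [Set.singleton_add]
    ext x
    simp [AffineIsometryEquiv.coe_constVAdd, vadd_eq_add]
  have h2 : ({c} + intrinsicInterior ℝ F : Set (Fin d → ℝ)) =
      (AffineIsometryEquiv.constVAdd ℝ (Fin d → ℝ) c).toAffineIsometry ''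
        intrinsicInterior ℝ F := by
    rw [Set.singleton_add]
    ext x
    simp [AffineIsometryEquiv.coe_constVAdd, vadd_eq_add]
  rw [h1, h2, AffineIsometry.image_intrinsicInterior]

lemma phi_iter {d : ℕ} {k : Type*} [Field k] {S : AddSubmonoid (Fin d → ℤ)} {p e : ℕ}
    {w : Fin d → ℤ} {φ : AddMonoidAlgebra k S → AddMonoidAlgebra k S}
    (hφmono1 : ∀ (v : S) (u : Fin d → ℤ), ((p : ℤ) ^ e) • u = ↑v - w →
      ∃ hu : u ∈ S, φ (AddMonoidAlgebra.single v (1 : k)) =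
        AddMonoidAlgebra.single (⟨u, hu⟩ : S) (1 : k))
    (vec : ℕ → (Fin d → ℤ)) (hstep : ∀ j, ((p : ℤ) ^ e) • vec j = vec (j + 1) - w) :
    ∀ n : ℕ, ∀ hn : vec n ∈ S, ∃ h0 : vec 0 ∈ S,
      φ^[n] (AddMonoidAlgebra.single (⟨vec n, hn⟩ : S) (1 : k)) =
        AddMonoidAlgebra.single (⟨vec 0, h0⟩ : S) (1 : k) := by
  intro n
  induction n with
  | zero => intro hn; exact ⟨hn, by simp⟩
  | succ n ih =>
    intro hn
    obtain ⟨hu, heq⟩ := hφmono1 ⟨vec (n + 1), hn⟩ (vec n) (hstep n)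
    obtain ⟨h0, h0eq⟩ := ih hu
    exact ⟨h0, by rw [Function.iterate_succ_apply, heq, h0eq]⟩

lemma single_sum_mem_pow {d : ℕ} {k : Type*} [Field k] {S : AddSubmonoid (Fin d → ℤ)}
    (𝔞 : Ideal (AddMonoidAlgebra k S)) {ι : Type*} (s : Finset ι) (f : ι → S) (nn : ι → ℕ)
    (hf : ∀ i ∈ s, AddMonoidAlgebra.single (f i) (1 : k) ∈ 𝔞) :
    AddMonoidAlgebra.single (∑ i ∈ s, nn i • f i) (1 : k) ∈ 𝔞 ^ (∑ i ∈ s, nn i) := by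
  classical
  induction s using Finset.induction with
  | empty => simp [Ideal.one_eq_top]
  | insert _ _ hnotmem =>
    rename_i a s' ih
    rw [Finset.sum_insert hnotmem, Finset.sum_insert hnotmem, pow_add]
    have h1 : AddMonoidAlgebra.single (nn a • f a + ∑ i ∈ s', nn i • f i) (1 : k) =
        AddMonoidAlgebra.single (nn a • f a) (1 : k) *
          AddMonoidAlgebra.single (∑ i ∈ s', nn i • f i) (1 : k) := by
      rw [AddMonoidAlgebra.single_mul_single, one_mul]
    rw [h1]
    refine Ideal.mul_mem_mul ?_ (ih fun i hi => hf i (Finset.mem_insert_of_mem hi))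
    have h2 : AddMonoidAlgebra.single (nn a • f a) (1 : k) =
        AddMonoidAlgebra.single (f a) (1 : k) ^ nn a := by
      rw [AddMonoidAlgebra.single_pow, one_pow]
    rw [h2]
    exact Ideal.pow_mem_pow (hf a (Finset.mem_insert_self a s')) _

lemma mem_intClSet {R : Type*} [CommRing R] (J : Ideal R) (x : R) (m : ℕ) (hm : 0 < m)
    (hx : x ^ m ∈ J ^ m) : x ∈ intClSet J := by
  classical
  refine ⟨m, hm, fun i => if i = 0 then -(x ^ m) else 0, fun i hi => ?_, ?_⟩
  · by_cases h : i = 0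
    · subst h
      simpa using Submodule.neg_mem _ hx
    · simp [h]
  · rw [Finset.sum_eq_single_of_mem 0 (Finset.mem_range.2 hm)]
    · simp
    · intro b _ hb
      simp [hb]

/-- In the toric setting, if `I` is `C^{φ,𝔞^t}`-fixed, `F` is a face of
`t·Newt(𝔞)`, and some exponent `v₀` of a monomial of `I` lies in `w/(1−p^e) + F`, then
every lattice point `v ∈ relint(w/(1−p^e) + F) ∩ S` has `x^v ∈ I`. -/
theorem stmt_11 {d : ℕ} (k : Type*) [Field k] (p : ℕ) (hp : p.Prime) [CharP k p]
    (S : AddSubmonoid (Fin d → ℤ)) (σ : Set (Fin d → ℝ)) (hσ : IsRatPolyCone σ)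
    (hS : ∀ v : Fin d → ℤ, v ∈ S ↔ latticeEmbed v ∈ σ)
    (e : ℕ) (he : 0 < e) (w : Fin d → ℤ)
    (φ : AddMonoidAlgebra k S → AddMonoidAlgebra k S)
    (hφadd : ∀ x y, φ (x + y) = φ x + φ y)
    (hφlin : ∀ r x, φ (r ^ p ^ e * x) = r * φ x)
    (hφmono1 : ∀ (v : S) (u : Fin d → ℤ), ((p : ℤ) ^ e) • u = ↑v - w →
      ∃ hu : u ∈ S, φ (AddMonoidAlgebra.single v (1 : k)) =
        AddMonoidAlgebra.single (⟨u, hu⟩ : S) (1 : k))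
    (hφmono0 : ∀ v : S, (¬ ∃ u : Fin d → ℤ, ((p : ℤ) ^ e) • u = ↑v - w) →
      φ (AddMonoidAlgebra.single v (1 : k)) = 0)
    (𝔞 : Ideal (AddMonoidAlgebra k S)) (h𝔞 : IsMonomialIdeal k S 𝔞)
    (t : ℚ) (ht : 0 ≤ t) (hden : ¬ (p ∣ t.den))
    (I : Ideal (AddMonoidAlgebra k S)) (hI : IsCartierFixed p e t φ 𝔞 I)
    (F : Set (Fin d → ℝ)) (hF : IsFaceOf F ((t : ℝ) • Newt k S 𝔞))
    (v₀ : S) (hv₀ : AddMonoidAlgebra.single v₀ (1 : k) ∈ I)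
    (hv₀F : latticeEmbed ↑v₀ ∈ {(1 / (1 - (p : ℝ) ^ e)) • latticeEmbed w} + F) :
    ∀ v : S,
      latticeEmbed ↑v ∈
        intrinsicInterior ℝ ({(1 / (1 - (p : ℝ) ^ e)) • latticeEmbed w} + F) →
      AddMonoidAlgebra.single v (1 : k) ∈ I := by
  classical
  intro v hv
  set c' : Fin d → ℝ := (1 / (1 - (p : ℝ) ^ e)) • latticeEmbed w with hc'
  rw [intrinsic_translate] at hv
  rw [Set.singleton_add] at hv hv₀F
  obtain ⟨a, ha, hva⟩ := hv
  obtain ⟨b, hbF, hvb⟩ := hv₀F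
  have hpe1 : (1:ℝ) < (p : ℝ) ^ e :=
    one_lt_pow₀ (by exact_mod_cast hp.one_lt) he.ne'
  -- coordinates of a and b
  have ha_i : ∀ i, a i = ((v : Fin d → ℤ) i : ℝ) - (1 / (1 - (p:ℝ)^e)) * (w i : ℝ) := by
    intro i
    have := congrFun hva i
    simp only [latticeEmbed, hc', Pi.add_apply, Pi.smul_apply, smul_eq_mul] at this
    linarith
  have hb_i : ∀ i, b i = ((v₀ : Fin d → ℤ) i : ℝ) - (1 / (1 - (p:ℝ)^e)) * (w i : ℝ) := by
    intro i
    have := congrFun hvb i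
    simp only [latticeEmbed, hc', Pi.add_apply, Pi.smul_apply, smul_eq_mul] at this
    linarith
  rcases eq_or_lt_of_le ht with h0 | htpos
  · -- degenerate case t = 0
    have htR : (t : ℝ) = 0 := by rw [← h0]; norm_num
    have hF0 : F ⊆ {0} := by
      intro x hx
      have := hF.1 hx
      rw [htR] at this
      simpa using Set.zero_smul_set_subset _ this
    have haz : a = 0 := hF0 (intrinsicInterior_subset ha)
    have hbz : b = 0 := hF0 hbF
    have : (v : Fin d → ℤ) = (v₀ : Fin d → ℤ) := by
      funext i
      have h1 := ha_i i
      have h2 := hb_i i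
      rw [haz] at h1
      rw [hbz] at h2
      simp only [Pi.zero_apply] at h1 h2
      have : ((v : Fin d → ℤ) i : ℝ) = ((v₀ : Fin d → ℤ) i : ℝ) := by linarith
      exact_mod_cast this
    have hvv : v = v₀ := Subtype.ext this
    rw [hvv]
    exact hv₀
  · -- main case t > 0
    obtain ⟨ε, hε, hball⟩ := exists_eps_beyond ha hbF
    obtain ⟨n, N, hn, hNq, hC⟩ := exists_good_n p e hp he t ht hden (max (1/ε) 1)
    set K : ℝ := (p : ℝ) ^ (n * e) with hKdef
    have hK1 : 1 < K := by
      have := le_max_right (1/ε) 1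
      simp only [hKdef]
      linarith
    have hKpos : (0:ℝ) < K - 1 := by linarith
    have hKe : 1 / (K - 1) < ε := by
      have h1 : 1/ε < K - 1 := lt_of_le_of_lt (le_max_left _ _) hC
      rw [div_lt_iff₀ hKpos]
      have h2 : 1 < (K - 1) * ε := by
        have := (div_lt_iff₀ hε).1 h1
        linarith
      linarith
    set μq : ℝ := 1 / (K - 1) with hμq
    have hqF : a + μq • (a - b) ∈ F := hball μq (by positivity) hKe
    -- vec sequence
    set x : ℤ := (p : ℤ) ^ e with hxz
    set sZ : ℤ := ∑ i ∈ Finset.range n, x ^ i with hsZ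
    set vec : ℕ → (Fin d → ℤ) :=
      fun j => (x ^ j) • (v : Fin d → ℤ) + (∑ i ∈ Finset.range j, x ^ i) • w with hvecdef
    have hstep : ∀ j, ((p : ℤ) ^ e) • vec j = vec (j + 1) - w := by
      intro j
      funext i
      simp only [hvecdef, Pi.smul_apply, Pi.add_apply, Pi.sub_apply, smul_eq_mul, hxz]
      rw [geom_sum_succ]
      ring
    set g : Fin d → ℤ := vec n - (v₀ : Fin d → ℤ) with hgdef
    -- real value of the geometric sum
    have hKpow : ((p : ℝ) ^ e) ^ n = K := by rw [hKdef, ← pow_mul, mul_comm]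
    -- coordinate identity for g
    have hgq : ∀ i, ((g i : ℤ) : ℝ) = (K - 1) * ((a + μq • (a - b)) i) := by
      intro i
      have hg1 : (g i : ℝ) = K * ((v : Fin d → ℤ) i : ℝ)
          + ((K - 1) / ((p:ℝ)^e - 1)) * (w i : ℝ) - ((v₀ : Fin d → ℤ) i : ℝ) := by
        simp only [hgdef, hvecdef, Pi.sub_apply, Pi.add_apply, Pi.smul_apply, smul_eq_mul]
        push_cast [hxz]
        rw [geom_sum_eq (by linarith : ((p:ℝ)^e) ≠ 1) n, hKpow]
      simp only [Pi.add_apply, Pi.smul_apply, Pi.sub_apply, smul_eq_mul]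
      rw [hg1, ha_i i, hb_i i, hμq]
      have hne1 : (1:ℝ) - (p:ℝ)^e ≠ 0 := by linarith
      have hne2 : (p:ℝ)^e - 1 ≠ 0 := by linarith
      field_simp
      ring
    -- q lies in t • Newt
    obtain ⟨z₀, hz₀Newt, hz₀q⟩ := hF.1 hqF
    have hNR : (N : ℝ) = (t : ℝ) * (K - 1) := by
      have := congrArg (fun q : ℚ => (q : ℝ)) hNq
      push_cast at this
      rw [hKdef]
      exact this
    have htRpos : (0:ℝ) < (t : ℝ) := by exact_mod_cast htpos
    have hNpos : (0:ℝ) < (N : ℝ) := by rw [hNR]; positivity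
    have hNnat : 0 < N := by exact_mod_cast hNpos
    have hgz : ∀ i, ((g i : ℤ) : ℝ) = (N : ℝ) * z₀ i := by
      intro i
      rw [hgq i, hNR]
      have := congrFun hz₀q i
      simp only [Pi.smul_apply, smul_eq_mul] at this
      rw [← this]
      ring
    -- g lies in S
    have hNewtσ : Newt k S 𝔞 ⊆ σ := by
      apply convexHull_min _ (cone_convex hσ)
      rintro y ⟨s, _, rfl⟩
      exact (hS _).1 s.2
    have hgσ : latticeEmbed g ∈ σ := by
      have hg_eq : latticeEmbed g = (N : ℝ) • z₀ := by
        funext i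
        simp only [latticeEmbed, Pi.smul_apply, smul_eq_mul]
        exact hgz i
      rw [hg_eq]
      exact cone_smul_mem hσ hNpos.le (hNewtσ hz₀Newt)
    have hgS : g ∈ S := (hS g).2 hgσ
    -- rational convex representation of z₀
    set A : Set (Fin d → ℝ) :=
      {y | ∃ s : S, AddMonoidAlgebra.single s (1 : k) ∈ 𝔞 ∧ y = latticeEmbed ↑s} with hA
    have hArat : ∀ y ∈ A, ∃ q : Fin d → ℚ, y = fun i => (q i : ℝ) := by
      rintro y ⟨s, _, rfl⟩
      exact ⟨fun i => ((s : Fin d → ℤ) i : ℚ), by funext i; simp [latticeEmbed]⟩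
    set q0 : Fin d → ℚ := fun i => (g i : ℚ) / (N : ℚ) with hq0
    have hz₀rat : (fun i => (q0 i : ℝ)) = z₀ := by
      funext i
      simp only [hq0]
      push_cast
      rw [hgz i]
      field_simp
    have hzhull : (fun i => (q0 i : ℝ)) ∈ convexHull ℝ A := by
      rw [hz₀rat]
      exact hz₀Newt
    obtain ⟨ι, hfin, pt, μ, hrange, hμ0, hμsum, hμcomb⟩ := rat_convex_rep A hArat q0 hzhull
    choose sj hsj𝔞 hsjpt using fun j => hrange (Set.mem_range_self j)
    -- common denominator
    set m : ℕ := ∏ j, (μ j).den with hm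
    have hmpos : 0 < m := Finset.prod_pos fun j _ => (μ j).pos
    have hc : ∀ j, ∃ cj : ℕ, (cj : ℚ) = μ j * m := by
      intro j
      have hdvdm : (μ j).den ∣ m := Finset.dvd_prod_of_mem _ (Finset.mem_univ j)
      obtain ⟨m', hm'⟩ := hdvdm
      refine ⟨((μ j).num * m').toNat, ?_⟩
      have hnum0 : 0 ≤ (μ j).num := Rat.num_nonneg.2 (hμ0 j)
      have h1 : (0:ℤ) ≤ (μ j).num * m' := mul_nonneg hnum0 (by positivity)
      have h2 : (((μ j).num * m' : ℤ) : ℚ) = μ j * m := by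
        push_cast
        rw [hm']
        push_cast
        rw [← mul_assoc]
        congr 1
        exact (Rat.mul_den_eq_num (μ j)).symm ▸ rfl
      have h5 : ((((μ j).num * m').toNat : ℕ) : ℚ) = (((μ j).num * m' : ℤ) : ℚ) := by
        exact_mod_cast congrArg (fun z : ℤ => (z : ℚ)) (Int.toNat_of_nonneg h1)
      rw [h5, h2]
    choose cc hcc using hc
    have hccsum : ∑ j, cc j = m := by
      have : ((∑ j, cc j : ℕ) : ℚ) = ((m : ℕ) : ℚ) := by
        push_cast
        rw [Finset.sum_congr rfl fun j _ => hcc j, ← Finset.sum_mul, hμsum, one_mul]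
      exact_mod_cast this
    set nn : ι → ℕ := fun j => cc j * N with hnn
    have hnnsum : ∑ j, nn j = m * N := by
      rw [hnn, ← Finset.sum_mul, hccsum]
    -- integer combination identity
    have hZcoord : ∀ i, (m : ℤ) * g i = ∑ j, ((nn j : ℤ) * (sj j : Fin d → ℤ) i) := by
      intro i
      have hreal : (m : ℝ) * (g i : ℝ) = ∑ j, ((nn j : ℝ) * ((sj j : Fin d → ℤ) i : ℝ)) := by
        have h1 := congrFun hμcomb i
        rw [Finset.sum_apply] at h1
        have h2 : ∑ j, (μ j : ℝ) * ((sj j : Fin d → ℤ) i : ℝ) = (q0 i : ℝ) := by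
          rw [← h1]
          refine Finset.sum_congr rfl fun j _ => ?_
          rw [hsjpt j]
          simp [latticeEmbed]
        have h3 : (q0 i : ℝ) = (g i : ℝ) / (N : ℝ) := by
          simp only [hq0]; push_cast; ring
        have h4 : ∀ j, (nn j : ℝ) = (μ j : ℝ) * (m : ℝ) * (N : ℝ) := by
          intro j
          have := hcc j
          have hcr : ((cc j : ℕ) : ℝ) = (μ j : ℝ) * (m : ℝ) := by exact_mod_cast this
          rw [hnn]
          push_cast
          rw [hcr]
        calc (m : ℝ) * (g i : ℝ) = (m : ℝ) * (N : ℝ) * ((g i : ℝ) / (N : ℝ)) := by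
              field_simp
          _ = (m : ℝ) * (N : ℝ) * ∑ j, (μ j : ℝ) * ((sj j : Fin d → ℤ) i : ℝ) := by
              rw [h2, h3]
          _ = ∑ j, ((nn j : ℝ) * ((sj j : Fin d → ℤ) i : ℝ)) := by
              rw [Finset.mul_sum]
              refine Finset.sum_congr rfl fun j _ => ?_
              rw [h4 j]
              ring
      exact_mod_cast hreal
    -- the monomial x^g is integral over 𝔞^N
    set gS : S := ⟨g, hgS⟩ with hgSdef
    have hvsum : (m • gS : S) = ∑ j, nn j • sj j := by
      apply Subtype.ext
      have hcoe : ((∑ j, nn j • sj j : S) : Fin d → ℤ) = ∑ j, (nn j : ℕ) • (sj j : Fin d → ℤ) := by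
        rw [AddSubmonoid.coe_finset_sum]
        rfl
      show m • g = _
      rw [hcoe]
      funext i
      simp only [Finset.sum_apply, Pi.smul_apply, smul_eq_mul]
      have := hZcoord i
      push_cast at this ⊢
      exact this
    have hpowmem : AddMonoidAlgebra.single gS (1 : k) ^ m ∈ (𝔞 ^ N) ^ m := by
      rw [AddMonoidAlgebra.single_pow, one_pow]
      rw [hvsum]
      have := single_sum_mem_pow 𝔞 Finset.univ sj nn (fun j _ => hsj𝔞 j)
      rw [hnnsum] at this
      rw [← pow_mul, mul_comm N m]
      exact this
    have hint : AddMonoidAlgebra.single gS (1 : k) ∈ intClSet (𝔞 ^ N) :=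
      mem_intClSet _ _ m hmpos hpowmem
    -- the element z
    set u : S := gS + v₀ with hu
    have hzprod : AddMonoidAlgebra.single gS (1 : k) * AddMonoidAlgebra.single v₀ (1 : k) =
        AddMonoidAlgebra.single u (1 : k) := by
      rw [AddMonoidAlgebra.single_mul_single, one_mul]
    have hzmem : AddMonoidAlgebra.single u (1 : k) ∈
        Ideal.span (intClSet (𝔞 ^ N)) * I := by
      rw [← hzprod]
      exact Ideal.mul_mem_mul (Ideal.subset_span hint) hv₀
    -- iterate φ
    have hucoe : (u : Fin d → ℤ) = vec n := by
      show g + (v₀ : Fin d → ℤ) = vec n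
      rw [hgdef]
      abel
    have hvecnS : vec n ∈ S := hucoe ▸ u.2
    obtain ⟨h0, hiter⟩ := phi_iter hφmono1 vec hstep n hvecnS
    have hvec0 : vec 0 = (v : Fin d → ℤ) := by
      simp [hvecdef]
    have hfix0 : (⟨vec 0, h0⟩ : S) = v := Subtype.ext hvec0
    have hfixn : (⟨vec n, hvecnS⟩ : S) = u := Subtype.ext hucoe.symm
    have hfinal : AddMonoidAlgebra.single v (1 : k) =
        φ^[n] (AddMonoidAlgebra.single u (1 : k)) := by
      rw [← hfix0, ← hiter, hfixn]
    rw [← hI]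
    exact Ideal.subset_span ⟨n, N, hn, hNq, AddMonoidAlgebra.single u (1 : k), hzmem, hfinal⟩
end

section
/- Let X' → X be a fixed log resolution and fix a ℚ-divisor D = K_{X'} − π*(K_X + Δ) − tG on X'. For reduced divisors E and F on X' with π(E), π(F) ⊆ Z, let E ∧ F denote the sum of their common components. Then for sufficiently small ε > 0, π_* O_{X'}(⌈D + εE⌉) ∩ π_* O_{X'}(⌈D + εF⌉) = π_* O_{X'}(⌈D + ε(E ∧ F)⌉). Consequently the set of intermediate adjoint ideals from a fixed resolution is closed under intersection. -/
/-- The pushforward `π_* O_{X'}(⌈B⌉)` of a round-up of an `ℝ`-divisor `B`, modelled as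
a subset of the function field `K`: the rational functions `g` with
`div(g) + ⌈B⌉ ≥ 0` componentwise, where `A` indexes the prime divisors on `X'` and
`ord i g` is the order of vanishing of `g` along the `i`-th prime divisor. -/
def secSet {K : Type*} [Zero K] (A : Type*) (ord : A → K → ℤ) (B : A → ℝ) : Set K :=
  {g | g = 0 ∨ ∀ i, (0 : ℝ) ≤ (ord i g : ℝ) + ((⌈B i⌉ : ℤ) : ℝ)}

/-- The indicator coefficient function of a reduced divisor with components `G`. -/
noncomputable def red {A : Type*} (G : Set A) : A → ℝ :=
  open Classical in fun i => if i ∈ G then 1 else 0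


lemma secSet_mono {K : Type*} [Zero K] (A : Type*) (ord : A → K → ℤ)
    {B B' : A → ℝ} (h : ∀ i, B i ≤ B' i) :
    secSet A ord B ⊆ secSet A ord B' := by
  rintro g (h0 | hg)
  · exact Or.inl h0
  · refine Or.inr fun i => le_trans (hg i) ?_
    have := Int.ceil_le_ceil (h i)
    have : ((⌈B i⌉ : ℤ) : ℝ) ≤ ((⌈B' i⌉ : ℤ) : ℝ) := by exact_mod_cast this
    linarith

lemma key {K : Type*} [Zero K] (A : Type*) (ord : A → K → ℤ) (D : A → ℝ)
    {ε : ℝ} (hε : 0 ≤ ε) (E F : Set A) :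
    secSet A ord (fun i => D i + ε * red E i) ∩
        secSet A ord (fun i => D i + ε * red F i)
      = secSet A ord (fun i => D i + ε * red (E ∩ F) i) := by
  apply subset_antisymm
  · rintro g ⟨hgE, hgF⟩
    rcases hgE with h0 | hgE
    · exact Or.inl h0
    rcases hgF with h0 | hgF
    · exact Or.inl h0
    refine Or.inr fun i => ?_
    by_cases hiE : i ∈ E
    · by_cases hiF : i ∈ F
      · have h1 := hgE i
        simp only [red, hiE, hiF, Set.mem_inter_iff, if_true, and_self] at h1 ⊢
        exact h1
      · have h1 := hgF i
        simp only [red, hiF, Set.mem_inter_iff, if_false, and_false, if_neg hiF,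
          if_neg (fun h : i ∈ E ∩ F => hiF h.2)] at h1 ⊢
        exact h1
    · have h1 := hgE i
      simp only [red, if_neg hiE, if_neg (fun h : i ∈ E ∩ F => hiE h.1)] at h1 ⊢
      exact h1
  · intro g hg
    have hle : ∀ (G : Set A), E ∩ F ⊆ G →
        g ∈ secSet A ord (fun i => D i + ε * red G i) := by
      intro G hG
      refine secSet_mono A ord (fun i => ?_) hg
      have : red (E ∩ F) i ≤ red G i := by
        by_cases hi : i ∈ E ∩ F
        · simp [red, hi, hG hi]
        · simp only [red, if_neg hi]
          positivity
      nlinarith [this]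
    exact ⟨hle E Set.inter_subset_left, hle F Set.inter_subset_right⟩

/-- Fix a log resolution `π : X' → X` and the `ℚ`-divisor
`D = K_{X'} − π^*(K_X + Δ) − tG` on `X'` (its coefficients indexed by the prime
divisors `A` of `X'`).  For reduced divisors `E, F` with components mapping into `Z`
(components indexed by subsets of `Zset ⊆ A`), and `E ∧ F` their common components,
for all sufficiently small `ε > 0`:
`π_* O(⌈D+εE⌉) ∩ π_* O(⌈D+εF⌉) = π_* O(⌈D+ε(E∧F)⌉)`; consequently the set of
intermediate adjoint ideals from the fixed resolution is closed under intersection. -/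
theorem stmt_17 {K : Type*} [Field K] (A : Type*) (ord : A → K → ℤ)
    (D : A → ℝ) (Zset : Set A) (E F : Set A) (hE : E ⊆ Zset) (hF : F ⊆ Zset) :
    ∃ ε₀ : ℝ, 0 < ε₀ ∧ ∀ ε : ℝ, 0 < ε → ε < ε₀ →
      (secSet A ord (fun i => D i + ε * red E i) ∩
          secSet A ord (fun i => D i + ε * red F i)
        = secSet A ord (fun i => D i + ε * red (E ∩ F) i)) ∧
      (∀ I J : Set K,
        I ∈ {T | ∃ G : Set A, G ⊆ Zset ∧ T = secSet A ord (fun i => D i + ε * red G i)} →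
        J ∈ {T | ∃ G : Set A, G ⊆ Zset ∧ T = secSet A ord (fun i => D i + ε * red G i)} →
        I ∩ J ∈
          {T | ∃ G : Set A, G ⊆ Zset ∧ T = secSet A ord (fun i => D i + ε * red G i)}) := by
  refine ⟨1, one_pos, fun ε hε _ => ⟨key A ord D hε.le E F, ?_⟩⟩
  rintro I J ⟨G1, hG1, rfl⟩ ⟨G2, hG2, rfl⟩
  exact ⟨G1 ∩ G2, fun i hi => hG1 hi.1, key A ord D hε.le G1 G2⟩
end
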